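/- In a complete regular semimetric space, every compact subset is closed. -/

import Mathlib

open Set Filter Topology ENNReal

namespace Semimetric

variable {X : Type*}

/-- Ball of radius `r` centered at `p`. -/
def Ball (d : X → X → ℝ) (p : X) (r : ℝ) : Set X := {x | d x p < r}

/-- A set is open iff each of its points is interior. -/
def IsOpenS (d : X → X → ℝ) (U : Set X) : Prop := ∀ p ∈ U, ∃ r > (0:ℝ), Ball d p r ⊆ U

def IsClosedS (d : X → X → ℝ) (A : Set X) : Prop := IsOpenS d Aᶜ

/-- Compactness in the ball-generated topology. -/
def IsCompactS (d : X → X → ℝ) (H : Set X) : Prop :=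
  ∀ C : Set (Set X), (∀ U ∈ C, IsOpenS d U) → H ⊆ ⋃₀ C →
    ∃ F ⊆ C, F.Finite ∧ H ⊆ ⋃₀ F

/-- Total boundedness: finite ε-nets exist for every ε > 0. -/
def TotBddS (d : X → X → ℝ) (H : Set X) : Prop :=
  ∀ ε > (0:ℝ), ∃ P : Finset X, H ⊆ ⋃ p ∈ P, Ball d p ε

/-- Boundedness: finite diameter. -/
def BoundedS (d : X → X → ℝ) (A : Set X) : Prop := ∃ M : ℝ, ∀ x ∈ A, ∀ y ∈ A, d x y ≤ M

def IsCauchyS (d : X → X → ℝ) (x : ℕ → X) : Prop :=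
  ∀ ε > (0:ℝ), ∃ N, ∀ m ≥ N, ∀ n ≥ N, d (x m) (x n) < ε

def ConvTo (d : X → X → ℝ) (x : ℕ → X) (p : X) : Prop :=
  Tendsto (fun n => d (x n) p) atTop (nhds 0)

def IsCompleteS (d : X → X → ℝ) : Prop :=
  ∀ x : ℕ → X, IsCauchyS d x → ∃ p, ConvTo d x p

/-- Extended-real-valued triangle function for the semimetric `d`. -/
def IsTriangleFun (d : X → X → ℝ) (Φ : ℝ → ℝ → ℝ≥0∞) : Prop :=
  (∀ u v, Φ u v = Φ v u) ∧
  (∀ u₁ u₂ v, 0 ≤ u₁ → u₁ ≤ u₂ → 0 ≤ v → Φ u₁ v ≤ Φ u₂ v) ∧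
  Φ 0 0 = 0 ∧
  ∀ x y z : X, ENNReal.ofReal (d x y) ≤ Φ (d x z) (d z y)

/-- Regularity: continuity at (0,0) (within the nonnegative quadrant). -/
def RegularAt00 (Φ : ℝ → ℝ → ℝ≥0∞) : Prop :=
  ContinuousWithinAt (fun p : ℝ × ℝ => Φ p.1 p.2) (Set.Ici 0 ×ˢ Set.Ici 0) (0, 0)

/-- Real-valued triangle function for the semimetric `d`. -/
def IsTriangleFunR (d : X → X → ℝ) (Φ : ℝ → ℝ → ℝ) : Prop :=
  (∀ u v, Φ u v = Φ v u) ∧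
  (∀ u₁ u₂ v, 0 ≤ u₁ → u₁ ≤ u₂ → 0 ≤ v → Φ u₁ v ≤ Φ u₂ v) ∧
  (∀ u v, 0 ≤ u → 0 ≤ v → 0 ≤ Φ u v) ∧
  Φ 0 0 = 0 ∧
  ∀ x y z : X, d x y ≤ Φ (d x z) (d z y)

/-- The basic triangle function of `d`. -/
noncomputable def PhiBasic (d : X → X → ℝ) (u v : ℝ) : ℝ≥0∞ :=
  sSup {e | ∃ x y p : X, d p x ≤ u ∧ d p y ≤ v ∧ e = ENNReal.ofReal (d x y)}

/-- The Hausdorff–Pompeiu distance of two sets. -/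
noncomputable def HD (d : X → X → ℝ) (A B : Set X) : ℝ≥0∞ :=
  sInf {ε : ℝ≥0∞ | 0 < ε ∧ (∀ a ∈ A, ∃ b ∈ B, ENNReal.ofReal (d a b) < ε) ∧
    (∀ b ∈ B, ∃ a ∈ A, ENNReal.ofReal (d b a) < ε)}

/-- Comparison function: increasing on ℝ₊, nonnegative, iterates tend to 0. -/
def IsComparison (φ : ℝ → ℝ) : Prop :=
  (∀ t, 0 ≤ t → 0 ≤ φ t) ∧
  (∀ s t, 0 ≤ s → s ≤ t → φ s ≤ φ t) ∧
  ∀ t > (0:ℝ), Tendsto (fun n => φ^[n] t) atTop (nhds 0)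

/-- φ-contraction. -/
def IsContraction (d : X → X → ℝ) (φ : ℝ → ℝ) (T : X → X) : Prop :=
  ∀ x y, d (T x) (T y) ≤ φ (d x y)

/-- ψ(t) = sup { s ≥ 0 : s ≤ Φ(t, φ(s)) }. -/
noncomputable def Psi (Φ : ℝ → ℝ → ℝ≥0∞) (φ : ℝ → ℝ) (t : ℝ) : ℝ≥0∞ :=
  sSup {e | ∃ s : ℝ, 0 ≤ s ∧ ENNReal.ofReal s ≤ Φ t (φ s) ∧ e = ENNReal.ofReal s}

end Semimetric

open Semimetric

section Aux
variable {Y : Type*}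

/-- Regularity gives: below any positive c, Φ is small near (0,0). -/
lemma key_small {Φ : ℝ → ℝ → ℝ≥0∞} (hreg : RegularAt00 Φ) (h00 : Φ 0 0 = 0)
    {c : ℝ≥0∞} (hc : 0 < c) :
    ∃ δ > (0:ℝ), ∀ u v : ℝ, 0 ≤ u → u < δ → 0 ≤ v → v < δ → Φ u v < c := by
  have h : {q : ℝ × ℝ | Φ q.1 q.2 < c} ∈
      nhdsWithin ((0:ℝ), (0:ℝ)) (Set.Ici 0 ×ˢ Set.Ici 0) := by
    have := hreg (Iio_mem_nhds (show Φ 0 0 < c by simpa [h00] using hc))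
    exact this
  rw [Metric.mem_nhdsWithin_iff] at h
  obtain ⟨ε, hε, hsub⟩ := h
  refine ⟨ε, hε, fun u v hu huε hv hvε => ?_⟩
  have hmem : ((u, v) : ℝ × ℝ) ∈ Metric.ball ((0:ℝ),(0:ℝ)) ε ∩ (Set.Ici 0 ×ˢ Set.Ici 0) := by
    refine ⟨?_, ⟨hu, hv⟩⟩
    rw [Metric.mem_ball, Prod.dist_eq]
    simp only [Real.dist_eq, sub_zero]
    rw [abs_of_nonneg hu, abs_of_nonneg hv]
    exact max_lt huε hvε
  exact hsub hmem

/-- Interior operator. -/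
def Intr (d : Y → Y → ℝ) (S : Set Y) : Set Y := {y | ∃ r > (0:ℝ), Ball d y r ⊆ S}

lemma intr_subset {d : Y → Y → ℝ} (hz : ∀ x, d x x = 0) (S : Set Y) :
    Intr d S ⊆ S := by
  rintro y ⟨r, hr, hsub⟩
  exact hsub (show d y y < r by simpa [hz y] using hr)

lemma intr_open {d : Y → Y → ℝ} {Φ : ℝ → ℝ → ℝ≥0∞}
    (hpos : ∀ x y, 0 ≤ d x y)
    (htri : ∀ x y z : Y, ENNReal.ofReal (d x y) ≤ Φ (d x z) (d z y))
    (hreg : RegularAt00 Φ) (h00 : Φ 0 0 = 0) (S : Set Y) :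
    IsOpenS d (Intr d S) := by
  rintro y ⟨r, hr, hsub⟩
  obtain ⟨δ, hδ, hδs⟩ := key_small hreg h00 (c := ENNReal.ofReal r) (by simpa using hr)
  refine ⟨δ, hδ, fun z hz => ⟨δ, hδ, fun w hw => hsub ?_⟩⟩
  have h1 : ENNReal.ofReal (d w y) ≤ Φ (d w z) (d z y) := htri w y z
  have h2 : Φ (d w z) (d z y) < ENNReal.ofReal r :=
    hδs _ _ (hpos _ _) hw (hpos _ _) hz
  exact (ENNReal.ofReal_lt_ofReal_iff hr).mp (lt_of_le_of_lt h1 h2)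

end Aux

/-- compact subsets of complete regular semimetric spaces are closed. -/
theorem statement8 {X : Type*} (d : X → X → ℝ)
    (hpos : ∀ x y, 0 ≤ d x y) (hsymm : ∀ x y, d x y = d y x)
    (hzero : ∀ x y, d x y = 0 ↔ x = y)
    (hcomplete : IsCompleteS d)
    (Φ : ℝ → ℝ → ℝ≥0∞) (hΦ : IsTriangleFun d Φ) (hreg : RegularAt00 Φ)
    (H : Set X) (hH : IsCompactS d H) :
    IsClosedS d H := by
  obtain ⟨hΦsymm, hΦmono, hΦ00, hΦtri⟩ := hΦ
  have hself : ∀ x : X, d x x = 0 := fun x => (hzero x x).mpr rfl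
  intro p hp
  -- choose for each x a radius δ x such that Φ is < ofReal (d x p) on [0, δ x)²
  have hδex : ∀ x : X, ∃ δ : ℝ, 0 < δ ∧ (x ∈ H →
      ∀ u v : ℝ, 0 ≤ u → u < δ → 0 ≤ v → v < δ → Φ u v < ENNReal.ofReal (d x p)) := by
    intro x
    by_cases hx : x ∈ H
    · have hne : x ≠ p := fun h => hp (h ▸ hx)
      have hdp : 0 < d x p :=
        lt_of_le_of_ne (hpos x p) (fun h => hne ((hzero x p).mp h.symm))
      obtain ⟨δ, hδ, hδs⟩ :=
        key_small hreg hΦ00 (c := ENNReal.ofReal (d x p)) (by simpa using hdp)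
      exact ⟨δ, hδ, fun _ => hδs⟩
    · exact ⟨1, one_pos, fun hx' => absurd hx' hx⟩
  choose δ hδpos hδ using hδex
  -- the open cover
  set C : Set (Set X) := {U | ∃ x ∈ H, U = Intr d (Ball d x (δ x))} with hC
  have hopen : ∀ U ∈ C, IsOpenS d U := by
    rintro U ⟨x, _, rfl⟩
    exact intr_open hpos hΦtri hreg hΦ00 _
  have hcover : H ⊆ ⋃₀ C := by
    intro x hx
    refine ⟨Intr d (Ball d x (δ x)), ⟨x, hx, rfl⟩, ⟨δ x, hδpos x, subset_rfl⟩⟩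
  obtain ⟨F, hFC, hFfin, hHF⟩ := hH C hopen hcover
  -- witnesses for elements of F
  have hwit : ∀ U : Set X, ∃ x : X, U ∈ F → x ∈ H ∧ U = Intr d (Ball d x (δ x)) := by
    intro U
    by_cases hU : U ∈ F
    · obtain ⟨x, hx, hUx⟩ := hFC hU
      exact ⟨x, fun _ => ⟨hx, hUx⟩⟩
    · exact ⟨p, fun h => absurd h hU⟩
  choose xw hxw using hwit
  -- minimal radius over the finite subcover
  obtain ⟨η, hηpos, hηle⟩ : ∃ η > (0:ℝ), ∀ U ∈ F, η ≤ δ (xw U) := by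
    classical
    have hTne : (insert (1:ℝ) (hFfin.toFinset.image fun U => δ (xw U))).Nonempty :=
      ⟨1, Finset.mem_insert_self _ _⟩
    refine ⟨(insert (1:ℝ) (hFfin.toFinset.image fun U => δ (xw U))).min' hTne, ?_, ?_⟩
    · refine (Finset.lt_min'_iff _ _).mpr fun a ha => ?_
      rcases Finset.mem_insert.mp ha with h | h
      · rw [h]; norm_num
      · obtain ⟨U, _, hU⟩ := Finset.mem_image.mp h
        rw [← hU]; exact hδpos _
    · intro U hU
      exact Finset.min'_le _ _ (Finset.mem_insert_of_mem
        (Finset.mem_image.mpr ⟨U, hFfin.mem_toFinset.mpr hU, rfl⟩))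
  refine ⟨η, hηpos, fun y hy => ?_⟩
  intro hyH
  obtain ⟨U, hUF, hyU⟩ := hHF hyH
  obtain ⟨hxH, hUeq⟩ := hxw U hUF
  set x := xw U
  have hyball : y ∈ Ball d x (δ x) := intr_subset hself _ (hUeq ▸ hyU)
  have hdyx : d y x < δ x := hyball
  have hdyp : d y p < δ x := lt_of_lt_of_le hy (hηle U hUF)
  have h1 : ENNReal.ofReal (d x p) ≤ Φ (d x y) (d y p) := hΦtri x p y
  have h2 : Φ (d x y) (d y p) < ENNReal.ofReal (d x p) := by
    have := hδ x hxH (d x y) (d y p) (hpos _ _) (by rwa [hsymm x y]) (hpos _ _) hdyp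
    exact this
  exact absurd (lt_of_le_of_lt h1 h2) (lt_irrefl _)
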